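/- If 0 ≤ i < j ≤ n−1 and BWT[i] = BWT[j], then LF[i] < LF[j]; that is, the LF-mapping is strictly increasing on the set of positions carrying the same BWT character. -/

import Mathlib

/-- Length of the longest common prefix of two lists. -/
def lcpLen {α : Type*} [DecidableEq α] : List α → List α → ℕ
  | a :: u, b :: v => if a = b then lcpLen u v + 1 else 0
  | _, _ => 0

/-- The suffix of `S` starting at position `i` (as a list). -/
def sfx {α : Type*} {n : ℕ} (S : Fin n → α) (i : ℕ) : List α :=
  (List.ofFn S).drop i
/-- Burrows–Wheeler transform: `BWT[i] = S[SUF[i]-1]` if `SUF[i] ≠ 0`,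
    and the sentinel `S[n-1]` otherwise. -/
def bwtOf {α : Type*} {n : ℕ} (hn : 0 < n) (S : Fin n → α)
    (SUF : Equiv.Perm (Fin n)) (i : Fin n) : α :=
  if (SUF i : ℕ) = 0 then S ⟨n - 1, by omega⟩
  else S ⟨(SUF i : ℕ) - 1, lt_of_le_of_lt (Nat.sub_le _ _) (Fin.isLt _)⟩

/-- LF-mapping: `LF[i] = ISA[SUF[i]-1]` if `SUF[i] ≠ 0`, and `0` otherwise. -/
def lfOf {n : ℕ} (hn : 0 < n) (SUF : Equiv.Perm (Fin n)) (i : Fin n) : Fin n :=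
  if (SUF i : ℕ) = 0 then ⟨0, hn⟩
  else SUF.symm ⟨(SUF i : ℕ) - 1, lt_of_le_of_lt (Nat.sub_le _ _) (Fin.isLt _)⟩

lemma sfx_cons {α : Type*} {n : ℕ} (S : Fin n → α) (p : ℕ) (hp : p < n) :
    sfx S p = S ⟨p, hp⟩ :: sfx S (p+1) := by
  unfold sfx
  rw [List.drop_eq_getElem_cons (by simpa using hp)]
  simp

/-- The LF-mapping is strictly increasing on positions carrying the same BWT character. -/
theorem lf_strict_mono_on_equal_bwt {α : Type*} [LinearOrder α] {n : ℕ} (hn : 0 < n)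
    (S : Fin n → α)
    (hsent : ∀ k : Fin n, (k : ℕ) < n - 1 → S ⟨n - 1, by omega⟩ < S k)
    (SUF : Equiv.Perm (Fin n))
    (hSUF : ∀ i j : Fin n, i < j →
      List.Lex (· < ·) (sfx S ((SUF i : Fin n) : ℕ)) (sfx S ((SUF j : Fin n) : ℕ)))
    (i j : Fin n) (hij : i < j)
    (hbwt : bwtOf hn S SUF i = bwtOf hn S SUF j) :
    lfOf hn SUF i < lfOf hn SUF j := by
  have hijn : (i : ℕ) < (j : ℕ) := hij
  have hn2 : 2 ≤ n := by have := j.isLt; omega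
  unfold bwtOf at hbwt
  unfold lfOf
  by_cases hi0 : (SUF i : ℕ) = 0
  · by_cases hj0 : (SUF j : ℕ) = 0
    · exact absurd (SUF.injective (Fin.ext (hi0.trans hj0.symm))) (ne_of_lt hij)
    · simp only [hi0, hj0, if_true, if_false, if_pos, if_neg] at hbwt
      have hq : ((SUF j : ℕ) - 1) < n - 1 := by have := (SUF j).isLt; omega
      exact absurd hbwt (ne_of_lt (hsent _ hq))
  · by_cases hj0 : (SUF j : ℕ) = 0
    · simp only [hi0, hj0, if_true, if_false, if_pos, if_neg] at hbwt
      have hp : ((SUF i : ℕ) - 1) < n - 1 := by have := (SUF i).isLt; omega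
      exact absurd hbwt.symm (ne_of_lt (hsent _ hp))
    · simp only [hi0, hj0, if_neg] at hbwt ⊢
      set p : ℕ := (SUF i : ℕ) - 1 with hpdef
      set q : ℕ := (SUF j : ℕ) - 1 with hqdef
      have hp : p < n := by have := (SUF i).isLt; omega
      have hq : q < n := by have := (SUF j).isLt; omega
      have hpq : p ≠ q := by
        intro h
        have : SUF i = SUF j := Fin.ext (by omega)
        exact absurd (SUF.injective this) (ne_of_lt hij)
      have hlex : List.Lex (· < ·) (sfx S p) (sfx S q) := by
        rw [sfx_cons S p hp, sfx_cons S q hq]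
        have h1 : p + 1 = (SUF i : ℕ) := by omega
        have h2 : q + 1 = (SUF j : ℕ) := by omega
        have hbwt' : S ⟨p, hp⟩ = S ⟨q, hq⟩ := hbwt
        rw [hbwt', h1, h2]
        exact List.Lex.cons (hSUF i j hij)
      rcases lt_trichotomy (SUF.symm ⟨p, hp⟩) (SUF.symm ⟨q, hq⟩) with h | h | h
      · exact h
      · exact absurd (congrArg Fin.val (SUF.symm.injective h)) hpq
      · exfalso
        have := hSUF _ _ h
        rw [Equiv.apply_symm_apply, Equiv.apply_symm_apply] at this
        exact List.lex_asymm (fun h1 h2 => lt_asymm h1 h2) hlex this
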